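/- Define T[W] = ‖√W Q⁻¹ U Q⁻¹ √W‖₁ / Tr[W Q⁻¹] and R = ‖Q^{-1/2} U Q^{-1/2}‖_∞ for positive definite W, Q and real antisymmetric U. Then 0 ≤ T[W] ≤ R. -/

import Mathlib

set_option maxHeartbeats 1000000


open Matrix

/-- the positive semidefinite square root as Mathlib (Dec 2024) defined `Matrix.PosSemidef.sqrt` -/
noncomputable def psdSqrt {n : ℕ} {A : Matrix (Fin n) (Fin n) ℝ} (hA : A.PosSemidef) :
    Matrix (Fin n) (Fin n) ℝ :=
  hA.1.eigenvectorUnitary.1 * diagonal ((↑) ∘ (√·) ∘ hA.1.eigenvalues) *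
    (star hA.1.eigenvectorUnitary : Matrix (Fin n) (Fin n) ℝ)

theorem psdSqrt_isHermitian {n : ℕ} {A : Matrix (Fin n) (Fin n) ℝ} (hA : A.PosSemidef) :
    (psdSqrt hA).IsHermitian := by
  unfold psdSqrt
  have hD : (diagonal ((↑) ∘ (√·) ∘ hA.1.eigenvalues) : Matrix (Fin n) (Fin n) ℝ).IsHermitian := by
    simp [IsHermitian]
  set u := hA.1.eigenvectorUnitary
  change (u.1 * _ * star u.1).IsHermitian
  rw [IsHermitian, star_eq_conjTranspose, conjTranspose_mul, conjTranspose_mul,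
    conjTranspose_conjTranspose, hD.eq, Matrix.mul_assoc]

noncomputable def traceNorm {n : ℕ} (A : Matrix (Fin n) (Fin n) ℝ) : ℝ :=
  (psdSqrt (Matrix.posSemidef_conjTranspose_mul_self A)).trace

noncomputable def singVals {n : ℕ} (A : Matrix (Fin n) (Fin n) ℝ) : Fin n → ℝ :=
  (psdSqrt_isHermitian (Matrix.posSemidef_conjTranspose_mul_self A)).eigenvalues

noncomputable def opNorm {n : ℕ} (A : Matrix (Fin n) (Fin n) ℝ) : ℝ :=
  ⨆ i, singVals A i

/-- the positive semidefinite square root, extended by `0` off psd matrices -/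
noncomputable def mySqrt {n : ℕ} (A : Matrix (Fin n) (Fin n) ℝ) : Matrix (Fin n) (Fin n) ℝ :=
  open Classical in
  if h : A.PosSemidef then psdSqrt h else 0

/-- the weight-dependent incompatibility measure `T[W]` -/
noncomputable def Tmeas {n : ℕ} (W Q U : Matrix (Fin n) (Fin n) ℝ) : ℝ :=
  traceNorm (mySqrt W * Q⁻¹ * U * Q⁻¹ * mySqrt W) / (W * Q⁻¹).trace

/-- the quantumness measure `R` -/
noncomputable def Rmeas {n : ℕ} (Q U : Matrix (Fin n) (Fin n) ℝ) : ℝ :=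
  opNorm (mySqrt Q⁻¹ * U * mySqrt Q⁻¹)

lemma psdSqrt_posSemidef {n : ℕ} {A : Matrix (Fin n) (Fin n) ℝ} (hA : A.PosSemidef) :
    (psdSqrt hA).PosSemidef := by
  unfold psdSqrt
  have hD : (diagonal ((↑) ∘ (√·) ∘ hA.1.eigenvalues) : Matrix (Fin n) (Fin n) ℝ).PosSemidef := by
    rw [posSemidef_diagonal_iff]; intro i; simp [Real.sqrt_nonneg]
  simpa [star_eq_conjTranspose] using hD.mul_mul_conjTranspose_same hA.1.eigenvectorUnitary.1

lemma psdSqrt_mul_self {n : ℕ} {A : Matrix (Fin n) (Fin n) ℝ} (hA : A.PosSemidef) :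
    psdSqrt hA * psdSqrt hA = A := by
  unfold psdSqrt
  have hu : (star hA.1.eigenvectorUnitary.1 : Matrix (Fin n) (Fin n) ℝ) * hA.1.eigenvectorUnitary.1 = 1 :=
    mem_unitaryGroup_iff'.mp hA.1.eigenvectorUnitary.2
  conv_rhs => rw [hA.1.spectral_theorem, Unitary.conjStarAlgAut_apply]
  set u := hA.1.eigenvectorUnitary
  set D := (diagonal ((↑) ∘ (√·) ∘ hA.1.eigenvalues) : Matrix (Fin n) (Fin n) ℝ) with hDdef
  calc u.1 * D * star u.1 * (u.1 * D * star u.1) = u.1 * (D * (star u.1 * u.1) * D) * star u.1 := by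
        noncomm_ring
    _ = _ := by
        rw [hu, mul_one, hDdef, diagonal_mul_diagonal]
        congr 2
        refine congrArg diagonal (funext fun i => ?_)
        simp [Real.mul_self_sqrt (hA.eigenvalues_nonneg i)]

lemma singVals_nonneg {n : ℕ} (N : Matrix (Fin n) (Fin n) ℝ) (i : Fin n) :
    0 ≤ singVals N i :=
  (psdSqrt_posSemidef (Matrix.posSemidef_conjTranspose_mul_self N)).eigenvalues_nonneg i

lemma singVals_le_opNorm {n : ℕ} (N : Matrix (Fin n) (Fin n) ℝ) (i : Fin n) :
    singVals N i ≤ opNorm N :=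
  le_ciSup (Set.Finite.bddAbove (Set.finite_range _)) i

lemma opNorm_nonneg {n : ℕ} (N : Matrix (Fin n) (Fin n) ℝ) : 0 ≤ opNorm N := by
  rcases Nat.eq_zero_or_pos n with h | h
  · subst h
    simp [opNorm, Real.iSup_of_isEmpty]
  · exact le_trans (singVals_nonneg N ⟨0, h⟩) (singVals_le_opNorm N ⟨0, h⟩)

lemma sqrt_spectral {n : ℕ} (N : Matrix (Fin n) (Fin n) ℝ) :
    ∃ V : Matrix (Fin n) (Fin n) ℝ, V * Vᵀ = 1 ∧ Vᵀ * V = 1 ∧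
      psdSqrt (Matrix.posSemidef_conjTranspose_mul_self N)
        = V * diagonal (singVals N) * Vᵀ := by
  set hS := Matrix.posSemidef_conjTranspose_mul_self N
  set hsq := psdSqrt_posSemidef hS
  refine ⟨hsq.1.eigenvectorUnitary.1, ?_, ?_, ?_⟩
  · simpa [star_eq_conjTranspose] using mem_unitaryGroup_iff.mp hsq.1.eigenvectorUnitary.2
  · simpa [star_eq_conjTranspose] using mem_unitaryGroup_iff'.mp hsq.1.eigenvectorUnitary.2
  · have h := hsq.1.spectral_theorem
    simpa [star_eq_conjTranspose, singVals, Function.comp, Unitary.conjStarAlgAut_apply] using h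


lemma dot_V_mulVec {n : ℕ} (V : Matrix (Fin n) (Fin n) ℝ) (x z : Fin n → ℝ) :
    x ⬝ᵥ (V *ᵥ z) = (Vᵀ *ᵥ x) ⬝ᵥ z := by
  rw [dotProduct_mulVec, mulVec_transpose]

lemma quad_eq {n : ℕ} (V : Matrix (Fin n) (Fin n) ℝ) (d : Fin n → ℝ) (x : Fin n → ℝ) :
    x ⬝ᵥ ((V * diagonal d * Vᵀ) *ᵥ x) = ∑ i, d i * (Vᵀ *ᵥ x) i ^ 2 := by
  rw [← mulVec_mulVec, ← mulVec_mulVec, dot_V_mulVec]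
  simp only [dotProduct, mulVec_diagonal]
  refine Finset.sum_congr rfl fun i _ => ?_
  ring

lemma vtv_eq {n : ℕ} (V : Matrix (Fin n) (Fin n) ℝ) (hV : V * Vᵀ = 1) (x : Fin n → ℝ) :
    (Vᵀ *ᵥ x) ⬝ᵥ (Vᵀ *ᵥ x) = x ⬝ᵥ x := by
  rw [← dot_V_mulVec, mulVec_mulVec, hV, one_mulVec]

lemma mulVec_sq_le {n : ℕ} (B : Matrix (Fin n) (Fin n) ℝ) (x : Fin n → ℝ) :
    (B *ᵥ x) ⬝ᵥ (B *ᵥ x) ≤ opNorm B ^ 2 * (x ⬝ᵥ x) := by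
  obtain ⟨V, hV1, hV2, hspec⟩ := sqrt_spectral B
  have hBB : Bᴴ * B = V * diagonal (fun i => singVals B i ^ 2) * Vᵀ := by
    have h2 : psdSqrt (Matrix.posSemidef_conjTranspose_mul_self B) *
        psdSqrt (Matrix.posSemidef_conjTranspose_mul_self B) = Bᴴ * B :=
      psdSqrt_mul_self (Matrix.posSemidef_conjTranspose_mul_self B)
    rw [← h2, hspec]
    calc V * diagonal (singVals B) * Vᵀ * (V * diagonal (singVals B) * Vᵀ)
        = V * (diagonal (singVals B) * (Vᵀ * V) * diagonal (singVals B)) * Vᵀ := by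
          noncomm_ring
      _ = V * diagonal (fun i => singVals B i ^ 2) * Vᵀ := by
          rw [hV2, mul_one, diagonal_mul_diagonal]
          congr 1; ext i; ring
  have key : (B *ᵥ x) ⬝ᵥ (B *ᵥ x) = x ⬝ᵥ ((Bᴴ * B) *ᵥ x) := by
    have hH : Bᴴ = Bᵀ := rfl
    rw [hH, ← mulVec_mulVec, dot_V_mulVec]
    exact dotProduct_comm _ _
  rw [key, hBB, quad_eq]
  have h1 : ∀ i, (singVals B i) ^ 2 * (Vᵀ *ᵥ x) i ^ 2 ≤ opNorm B ^ 2 * (Vᵀ *ᵥ x) i ^ 2 := fun i =>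
    mul_le_mul_of_nonneg_right
      (pow_le_pow_left₀ (singVals_nonneg B i) (singVals_le_opNorm B i) 2) (sq_nonneg _)
  calc ∑ i, (singVals B i) ^ 2 * (Vᵀ *ᵥ x) i ^ 2
      ≤ ∑ i, opNorm B ^ 2 * (Vᵀ *ᵥ x) i ^ 2 := Finset.sum_le_sum fun i _ => h1 i
    _ = opNorm B ^ 2 * ((Vᵀ *ᵥ x) ⬝ᵥ (Vᵀ *ᵥ x)) := by
        rw [← Finset.mul_sum]
        congr 1
        simp [dotProduct, pow_two]
    _ = opNorm B ^ 2 * (x ⬝ᵥ x) := by rw [vtv_eq V hV1 x]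


lemma dot_le {n : ℕ} (y z : Fin n → ℝ) :
    y ⬝ᵥ z ≤ Real.sqrt (y ⬝ᵥ y) * Real.sqrt (z ⬝ᵥ z) := by
  have h := Finset.sum_mul_sq_le_sq_mul_sq Finset.univ y z
  have h2 : y ⬝ᵥ z ≤ |∑ i, y i * z i| := le_abs_self _
  calc y ⬝ᵥ z ≤ |∑ i, y i * z i| := h2
    _ = Real.sqrt ((∑ i, y i * z i)^2) := (Real.sqrt_sq_eq_abs _).symm
    _ ≤ Real.sqrt ((∑ i, y i ^2) * (∑ i, z i ^2)) := Real.sqrt_le_sqrt h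
    _ = Real.sqrt (y ⬝ᵥ y) * Real.sqrt (z ⬝ᵥ z) := by
        rw [Real.sqrt_mul (by positivity)]
        simp [dotProduct, pow_two]

lemma psd_trace_nonneg {n : ℕ} {A : Matrix (Fin n) (Fin n) ℝ} (hA : A.PosSemidef) :
    0 ≤ A.trace := by
  exact hA.trace_nonneg

lemma trace_mul_nonneg {n : ℕ} {A B : Matrix (Fin n) (Fin n) ℝ}
    (hA : A.PosSemidef) (hB : B.PosSemidef) : 0 ≤ (A * B).trace := by
  have h : A * B = (psdSqrt hA) * ((psdSqrt hA) * B) := by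
    rw [← mul_assoc, psdSqrt_mul_self hA]
  rw [h, trace_mul_comm, mul_assoc]
  have hs : (psdSqrt hA).PosSemidef := psdSqrt_posSemidef hA
  have : ((psdSqrt hA) * B * (psdSqrt hA)).PosSemidef := by
    have := hB.mul_mul_conjTranspose_same (psdSqrt hA)
    rwa [hs.1.eq] at this
  exact psd_trace_nonneg (by rwa [mul_assoc] at this)


lemma trace_eq_sum_eigs {n : ℕ} {A : Matrix (Fin n) (Fin n) ℝ} (hA : A.IsHermitian) :
    A.trace = ∑ i, hA.eigenvalues i := by
  conv_lhs => rw [hA.spectral_theorem, Unitary.conjStarAlgAut_apply]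
  rw [trace_mul_cycle]
  have h1 : (star hA.eigenvectorUnitary.1 : Matrix (Fin n) (Fin n) ℝ) * hA.eigenvectorUnitary.1 = 1 :=
    mem_unitaryGroup_iff'.mp hA.eigenvectorUnitary.2
  rw [h1, one_mul, trace_diagonal]
  simp


lemma trace_transpose_mul_eq {n : ℕ} (Y Z : Matrix (Fin n) (Fin n) ℝ) :
    (Yᵀ * Z).trace = ∑ i, (fun k => Y k i) ⬝ᵥ (fun k => Z k i) := by
  simp [Matrix.trace, mul_apply, dotProduct, Matrix.diag]


lemma dotProduct_self_nonneg' {n : ℕ} (y : Fin n → ℝ) : 0 ≤ y ⬝ᵥ y :=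
  Finset.sum_nonneg fun i _ => mul_self_nonneg _

lemma traceNorm_conj_le {n : ℕ} (A B : Matrix (Fin n) (Fin n) ℝ) :
    traceNorm (A * B * Aᵀ) ≤ opNorm B * (A * Aᵀ).trace := by
  set N := A * B * Aᵀ with hNdef
  obtain ⟨V, hV1, hV2, hspec⟩ := sqrt_spectral N
  set σ : Fin n → ℝ := singVals N with hσdef
  have hσ0 : ∀ i, 0 ≤ σ i := singVals_nonneg N
  -- trace norm = sum of singular values
  have h0 : traceNorm N = ∑ i, σ i := trace_eq_sum_eigs _
  -- NᵀN spectral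
  have hNN : Nᵀ * N = V * diagonal (fun i => σ i ^ 2) * Vᵀ := by
    have h2 : psdSqrt (Matrix.posSemidef_conjTranspose_mul_self N) *
        psdSqrt (Matrix.posSemidef_conjTranspose_mul_self N) = Nᴴ * N :=
      psdSqrt_mul_self (Matrix.posSemidef_conjTranspose_mul_self N)
    have hH : Nᴴ = Nᵀ := rfl
    rw [← hH, ← h2, hspec]
    calc V * diagonal σ * Vᵀ * (V * diagonal σ * Vᵀ)
        = V * (diagonal σ * (Vᵀ * V) * diagonal σ) * Vᵀ := by noncomm_ring
      _ = V * diagonal (fun i => σ i ^ 2) * Vᵀ := by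
          rw [hV2, mul_one, diagonal_mul_diagonal]
          congr 1; ext i; ring
  set C := N * V with hCdef
  have hCC : Cᵀ * C = diagonal (fun i => σ i ^ 2) := by
    rw [hCdef, transpose_mul]
    calc Vᵀ * Nᵀ * (N * V) = Vᵀ * (Nᵀ * N) * V := by noncomm_ring
      _ = (Vᵀ * V) * diagonal (fun i => σ i ^ 2) * (Vᵀ * V) := by rw [hNN]; noncomm_ring
      _ = diagonal (fun i => σ i ^ 2) := by rw [hV2]; simp
  set g : Fin n → ℝ := fun i => if σ i = 0 then 0 else (σ i)⁻¹ with hgdef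
  set Um := C * diagonal g with hUmdef
  -- sum of singular values as a trace
  have hUC : Umᵀ * C = diagonal (fun i => if σ i = 0 then 0 else σ i) := by
    rw [hUmdef, transpose_mul, diagonal_transpose, mul_assoc, hCC, diagonal_mul_diagonal]
    refine congrArg Matrix.diagonal (funext fun i => ?_)
    by_cases h : σ i = 0
    · simp [hgdef, h]
    · simp only [hgdef, if_neg h]
      rw [sq, ← mul_assoc, inv_mul_cancel₀ h, one_mul]
  have hsum : ∑ i, σ i = (Umᵀ * C).trace := by
    rw [hUC, trace_diagonal]
    refine Finset.sum_congr rfl fun i _ => ?_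
    by_cases h : σ i = 0 <;> simp [h]
  -- the projection
  have hUU : Umᵀ * Um = diagonal (fun i => if σ i = 0 then 0 else 1) := by
    rw [hUmdef, transpose_mul, diagonal_transpose]
    calc diagonal g * Cᵀ * (C * diagonal g) = diagonal g * (Cᵀ * C) * diagonal g := by
          noncomm_ring
      _ = diagonal (fun i => if σ i = 0 then 0 else 1) := by
          rw [hCC, diagonal_mul_diagonal, diagonal_mul_diagonal]
          refine congrArg Matrix.diagonal (funext fun i => ?_)
          by_cases h : σ i = 0
          · simp [hgdef, h]
          · simp only [hgdef, if_neg h]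
            field_simp
  have hUe : Um * diagonal (fun i => if σ i = 0 then 0 else (1:ℝ)) = Um := by
    rw [hUmdef, mul_assoc, diagonal_mul_diagonal]
    refine congrArg (C * diagonal ·) (funext fun i => ?_)
    by_cases h : σ i = 0 <;> simp [hgdef, h]
  have hP2 : (Um * Umᵀ) * (Um * Umᵀ) = Um * Umᵀ := by
    calc (Um * Umᵀ) * (Um * Umᵀ) = Um * (Umᵀ * Um) * Umᵀ := by noncomm_ring
      _ = Um * Umᵀ := by
          rw [hUU, hUe]
  have h1P : (1 - Um * Umᵀ).PosSemidef := by
    have hPt : (1 - Um * Umᵀ)ᵀ = 1 - Um * Umᵀ := by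
      rw [transpose_sub, transpose_one, transpose_mul, transpose_transpose]
    have heq : (1 - Um * Umᵀ)ᴴ * (1 - Um * Umᵀ) = 1 - Um * Umᵀ := by
      have hH : (1 - Um * Umᵀ)ᴴ = (1 - Um * Umᵀ)ᵀ := rfl
      have hexp : (1 - Um * Umᵀ) * (1 - Um * Umᵀ)
          = 1 - Um * Umᵀ - Um * Umᵀ + (Um * Umᵀ) * (Um * Umᵀ) := by noncomm_ring
      rw [hH, hPt, hexp, hP2]
      abel
    have hpsd := Matrix.posSemidef_conjTranspose_mul_self (1 - Um * Umᵀ)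
    rwa [heq] at hpsd
  -- traces of A*Aᵀ
  have hAAt : A * Aᵀ = A * Aᴴ := rfl
  have hAA : (A * Aᵀ).PosSemidef := by
    rw [hAAt]; exact posSemidef_self_mul_conjTranspose A
  set τ := (A * Aᵀ).trace with hτdef
  have hτ0 : 0 ≤ τ := psd_trace_nonneg hAA
  set X := Aᵀ * V with hXdef
  set Y := Aᵀ * Um with hYdef
  -- trace(XᵀX) = τ
  have hXX : (Xᵀ * X).trace = τ := by
    rw [hXdef, transpose_mul, transpose_transpose]
    have : Vᵀ * A * (Aᵀ * V) = Vᵀ * (A * Aᵀ) * V := by noncomm_ring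
    rw [this, trace_mul_cycle, ← mul_assoc, hV1, one_mul]
  -- trace(YᵀY) ≤ τ
  have hYY : (Yᵀ * Y).trace ≤ τ := by
    rw [hYdef, transpose_mul, transpose_transpose]
    have h1 : Umᵀ * A * (Aᵀ * Um) = Umᵀ * (A * Aᵀ) * Um := by noncomm_ring
    rw [h1, trace_mul_cycle]
    have h3 : 0 ≤ ((1 - Um * Umᵀ) * (A * Aᵀ)).trace := trace_mul_nonneg h1P hAA
    have h4 : ((1 - Um * Umᵀ) * (A * Aᵀ)).trace = τ - (Um * Umᵀ * (A * Aᵀ)).trace := by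
      rw [sub_mul, one_mul, trace_sub]
    linarith
  -- key trace identity
  have key : ∑ i, σ i = (Yᵀ * (B * X)).trace := by
    rw [hsum]
    congr 1
    simp only [hYdef, hXdef, hCdef, hNdef, transpose_mul, transpose_transpose]
    noncomm_ring
  -- column-wise bound
  set R := opNorm B with hRdef
  have hR0 : 0 ≤ R := opNorm_nonneg B
  have bound : (Yᵀ * (B * X)).trace
      ≤ R * (Real.sqrt ((Yᵀ * Y).trace) * Real.sqrt ((Xᵀ * X).trace)) := by
    rw [trace_transpose_mul_eq Y (B * X), trace_transpose_mul_eq Y Y,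
      trace_transpose_mul_eq X X]
    have hcol : ∀ i, (fun k => (B * X) k i) = B *ᵥ (fun k => X k i) := by
      intro i; funext k; simp [mul_apply, mulVec, dotProduct]
    have step1 : ∀ i, (fun k => Y k i) ⬝ᵥ (fun k => (B * X) k i)
        ≤ Real.sqrt ((fun k => Y k i) ⬝ᵥ (fun k => Y k i))
          * (R * Real.sqrt ((fun k => X k i) ⬝ᵥ (fun k => X k i))) := by
      intro i
      set y := (fun k => Y k i) with hy
      set x := (fun k => X k i) with hx
      calc y ⬝ᵥ (fun k => (B * X) k i) = y ⬝ᵥ (B *ᵥ x) := by rw [hcol i]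
        _ ≤ Real.sqrt (y ⬝ᵥ y) * Real.sqrt ((B *ᵥ x) ⬝ᵥ (B *ᵥ x)) := dot_le _ _
        _ ≤ Real.sqrt (y ⬝ᵥ y) * (R * Real.sqrt (x ⬝ᵥ x)) := by
            apply mul_le_mul_of_nonneg_left _ (Real.sqrt_nonneg _)
            calc Real.sqrt ((B *ᵥ x) ⬝ᵥ (B *ᵥ x))
                ≤ Real.sqrt (R ^ 2 * (x ⬝ᵥ x)) := Real.sqrt_le_sqrt (mulVec_sq_le B x)
              _ = R * Real.sqrt (x ⬝ᵥ x) := by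
                  rw [Real.sqrt_mul (sq_nonneg R), Real.sqrt_sq hR0]
    calc ∑ i, (fun k => Y k i) ⬝ᵥ (fun k => (B * X) k i)
        ≤ ∑ i, Real.sqrt ((fun k => Y k i) ⬝ᵥ (fun k => Y k i))
            * (R * Real.sqrt ((fun k => X k i) ⬝ᵥ (fun k => X k i))) :=
          Finset.sum_le_sum fun i _ => step1 i
      _ = R * ((fun i => Real.sqrt ((fun k => Y k i) ⬝ᵥ (fun k => Y k i)))
            ⬝ᵥ (fun i => Real.sqrt ((fun k => X k i) ⬝ᵥ (fun k => X k i)))) := by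
          simp only [dotProduct]
          rw [Finset.mul_sum]
          exact Finset.sum_congr rfl fun i _ => by ring
      _ ≤ R * (Real.sqrt (∑ i, (fun k => Y k i) ⬝ᵥ (fun k => Y k i))
            * Real.sqrt (∑ i, (fun k => X k i) ⬝ᵥ (fun k => X k i))) := by
          apply mul_le_mul_of_nonneg_left _ hR0
          have hcs := dot_le (fun i => Real.sqrt ((fun k => Y k i) ⬝ᵥ (fun k => Y k i)))
            (fun i => Real.sqrt ((fun k => X k i) ⬝ᵥ (fun k => X k i)))
          have e1 : (fun i => Real.sqrt ((fun k => Y k i) ⬝ᵥ (fun k => Y k i)))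
              ⬝ᵥ (fun i => Real.sqrt ((fun k => Y k i) ⬝ᵥ (fun k => Y k i)))
              = ∑ i, (fun k => Y k i) ⬝ᵥ (fun k => Y k i) := by
            refine Finset.sum_congr rfl fun i _ => ?_
            exact Real.mul_self_sqrt (dotProduct_self_nonneg' _)
          have e2 : (fun i => Real.sqrt ((fun k => X k i) ⬝ᵥ (fun k => X k i)))
              ⬝ᵥ (fun i => Real.sqrt ((fun k => X k i) ⬝ᵥ (fun k => X k i)))
              = ∑ i, (fun k => X k i) ⬝ᵥ (fun k => X k i) := by
            refine Finset.sum_congr rfl fun i _ => ?_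
            exact Real.mul_self_sqrt (dotProduct_self_nonneg' _)
          rw [e1, e2] at hcs
          exact hcs
  -- assemble
  have hfin : (Yᵀ * (B * X)).trace ≤ R * τ := by
    refine le_trans bound ?_
    apply mul_le_mul_of_nonneg_left _ hR0
    calc Real.sqrt ((Yᵀ * Y).trace) * Real.sqrt ((Xᵀ * X).trace)
        ≤ Real.sqrt τ * Real.sqrt τ := by
          rw [hXX]
          exact mul_le_mul_of_nonneg_right (Real.sqrt_le_sqrt hYY) (Real.sqrt_nonneg _)
      _ = τ := Real.mul_self_sqrt hτ0
  calc traceNorm N = ∑ i, σ i := h0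
    _ = (Yᵀ * (B * X)).trace := key
    _ ≤ R * τ := hfin


lemma mySqrt_of_posSemidef {n : ℕ} {A : Matrix (Fin n) (Fin n) ℝ} (h : A.PosSemidef) :
    mySqrt A = psdSqrt h := dif_pos h

lemma mySqrt_mul_self' {n : ℕ} {A : Matrix (Fin n) (Fin n) ℝ} (h : A.PosSemidef) :
    mySqrt A * mySqrt A = A := by
  rw [mySqrt_of_posSemidef h]; exact psdSqrt_mul_self h

lemma mySqrt_transpose {n : ℕ} {A : Matrix (Fin n) (Fin n) ℝ} (h : A.PosSemidef) :
    (mySqrt A)ᵀ = mySqrt A := by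
  rw [mySqrt_of_posSemidef h]
  exact (psdSqrt_posSemidef h).1

lemma traceNorm_nonneg' {n : ℕ} (M : Matrix (Fin n) (Fin n) ℝ) : 0 ≤ traceNorm M :=
  psd_trace_nonneg (psdSqrt_posSemidef (Matrix.posSemidef_conjTranspose_mul_self M))

/-- 0 ≤ T[W] ≤ R for positive definite W, Q and antisymmetric U. -/
theorem Tmeas_nonneg_le_Rmeas {n : ℕ} (W Q U : Matrix (Fin n) (Fin n) ℝ)
    (hW : W.PosDef) (hQ : Q.PosDef) (hU : Uᵀ = -U) :
    0 ≤ Tmeas W Q U ∧ Tmeas W Q U ≤ Rmeas Q U := by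
  have hQinv : (Q⁻¹).PosDef := hQ.inv
  have hWp := hW.posSemidef
  have hQp := hQinv.posSemidef
  set S := mySqrt W with hSdef
  set T := mySqrt Q⁻¹ with hTdef
  have hSS : S * S = W := mySqrt_mul_self' hWp
  have hTT : T * T = Q⁻¹ := mySqrt_mul_self' hQp
  have hSt : Sᵀ = S := mySqrt_transpose hWp
  have hTt : Tᵀ = T := mySqrt_transpose hQp
  set A := S * T with hA
  have hAt : Aᵀ = T * S := by rw [hA, transpose_mul, hSt, hTt]
  have hM : S * Q⁻¹ * U * Q⁻¹ * S = A * (T * U * T) * Aᵀ := by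
    rw [hAt, hA, ← hTT]; noncomm_ring
  have hAA : (A * Aᵀ).PosSemidef := posSemidef_self_mul_conjTranspose A
  have htr : (W * Q⁻¹).trace = (A * Aᵀ).trace := by
    have e1 : W * Q⁻¹ = S * (S * (T * T)) := by rw [← hSS, ← hTT]; noncomm_ring
    have e2 : A * Aᵀ = (S * (T * T)) * S := by rw [hAt, hA]; noncomm_ring
    rw [e1, e2, trace_mul_comm]
  have hT0 : 0 ≤ (W * Q⁻¹).trace := htr ▸ psd_trace_nonneg hAA
  have hmain : traceNorm (S * Q⁻¹ * U * Q⁻¹ * S) ≤ opNorm (T * U * T) * (W * Q⁻¹).trace := by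
    rw [hM, htr]
    exact traceNorm_conj_le A (T * U * T)
  have hTm : Tmeas W Q U = traceNorm (S * Q⁻¹ * U * Q⁻¹ * S) / (W * Q⁻¹).trace := rfl
  have hRm : Rmeas Q U = opNorm (T * U * T) := rfl
  constructor
  · rw [hTm]
    exact div_nonneg (traceNorm_nonneg' _) hT0
  · rcases hT0.eq_or_lt with h | h
    · rw [hTm, ← h, div_zero, hRm]
      exact opNorm_nonneg _
    · rw [hTm, hRm, div_le_iff₀ h]
      exact hmain
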